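/- For r ≥ 2, Φ_{2^r}⁺(x) = u_{2^{r−2}}(x), i.e. the minimal polynomial of 2cos(2π/2^r) = 2cos(π/2^{r−1}) over ℚ equals 2·T_{2^{r−2}}(x/2). -/

import Mathlib

open Polynomial Real

/-- `u n = 2 * T n (x/2)` where `T` is the Chebyshev polynomial of the first kind. -/
noncomputable def u (n : ℕ) : Polynomial ℚ :=
  2 * (Polynomial.Chebyshev.T ℚ n).comp (Polynomial.C (1/2) * Polynomial.X)

/-- The integer polynomials `q 0 = X`, `q (k+1) = (q k)^2 - 2`. -/
noncomputable def q : ℕ → Polynomial ℤ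
  | 0 => X
  | (k+1) => (q k) ^ 2 - 2

lemma two_poly_zmod : (2 : Polynomial (ZMod 2)) = 0 := by
  rw [show (2 : Polynomial (ZMod 2)) = ((2:ℕ) : Polynomial (ZMod 2)) by norm_cast,
    ← C_eq_natCast]
  norm_num
  rfl

lemma q_monic_natDegree (k : ℕ) : (q k).Monic ∧ (q k).natDegree = 2 ^ k := by
  induction k with
  | zero => exact ⟨monic_X, natDegree_X⟩
  | succ k ih =>
    obtain ⟨hm, hd⟩ := ih
    have hpow : ((q k) ^ 2).Monic := hm.pow 2
    have hdpow : ((q k) ^ 2).natDegree = 2 ^ (k + 1) := by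
      rw [hm.natDegree_pow, hd]; ring
    have hdeg : (2 : Polynomial ℤ).degree < ((q k) ^ 2).degree := by
      rw [Polynomial.degree_eq_natDegree hpow.ne_zero, hdpow]
      calc (2 : Polynomial ℤ).degree ≤ 0 := by
            rw [show (2 : Polynomial ℤ) = C 2 by simp]; exact degree_C_le
        _ < ((2 ^ (k+1) : ℕ) : WithBot ℕ) := by
            exact_mod_cast WithBot.coe_lt_coe.2 (pow_pos two_pos _)
    have hmonic : (q (k+1)).Monic := hpow.sub_of_left hdeg
    refine ⟨hmonic, ?_⟩
    show ((q k) ^ 2 - 2).natDegree = 2 ^ (k + 1)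
    rw [← hdpow]
    exact natDegree_sub_eq_left_of_natDegree_lt (by
      rw [hdpow]
      calc (2 : Polynomial ℤ).natDegree = 0 := by
            rw [show (2 : Polynomial ℤ) = C 2 by simp]; exact natDegree_C 2
        _ < 2 ^ (k+1) := pow_pos two_pos _)

lemma q_monic (k : ℕ) : (q k).Monic := (q_monic_natDegree k).1

lemma q_natDegree (k : ℕ) : (q k).natDegree = 2 ^ k := (q_monic_natDegree k).2

lemma u_two_mul (n : ℕ) : u (2 * n) = (u n) ^ 2 - 2 := by
  unfold u
  have hcast : ((2 * n : ℕ) : ℤ) = 2 * (n : ℤ) := by push_cast; ring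
  rw [hcast, Polynomial.Chebyshev.T_mul, Polynomial.comp_assoc,
    Polynomial.Chebyshev.T_two]
  set g := (Polynomial.Chebyshev.T ℚ n).comp (C (1/2 : ℚ) * X) with hg
  have : (2 * X ^ 2 - 1 : Polynomial ℚ).comp g = 2 * g ^ 2 - 1 := by
    simp [sub_comp, mul_comp, pow_comp]
  rw [this]; ring

lemma q_map (k : ℕ) : (q k).map (algebraMap ℤ ℚ) = u (2 ^ k) := by
  induction k with
  | zero =>
    show (X : Polynomial ℤ).map (algebraMap ℤ ℚ) = u 1
    rw [map_X]
    unfold u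
    rw [show ((1 : ℕ) : ℤ) = 1 from rfl, Polynomial.Chebyshev.T_one, X_comp]
    rw [(map_ofNat (C : ℚ →+* Polynomial ℚ) 2).symm, ← mul_assoc, ← C_mul]
    norm_num
  | succ k ih =>
    show ((q k) ^ 2 - 2).map (algebraMap ℤ ℚ) = u (2 ^ (k+1))
    rw [show (2 ^ (k+1) : ℕ) = 2 * 2 ^ k by ring, u_two_mul, ← ih]
    simp [Polynomial.map_sub, Polynomial.map_pow, Polynomial.map_ofNat]

lemma q_eval_two (k : ℕ) : (q k).eval 2 = 2 := by
  induction k with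
  | zero => simp [q]
  | succ k ih =>
    show (((q k) ^ 2 - 2 : Polynomial ℤ)).eval 2 = 2
    simp [ih]

lemma q_map_zmod (k : ℕ) : (q k).map (Int.castRingHom (ZMod 2)) = X ^ (2 ^ k) := by
  induction k with
  | zero =>
    show (X : Polynomial ℤ).map _ = X ^ (2 ^ 0)
    simp
  | succ k ih =>
    show (((q k) ^ 2 - 2 : Polynomial ℤ)).map (Int.castRingHom (ZMod 2)) = X ^ (2 ^ (k+1))
    rw [Polynomial.map_sub, Polynomial.map_pow, ih, Polynomial.map_ofNat,
      two_poly_zmod, sub_zero, ← pow_mul, show 2 ^ k * 2 = 2 ^ (k+1) by ring]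

lemma q_irreducible (k : ℕ) : Irreducible (q k) := by
  set f : Polynomial ℤ := (q k).comp (X + C 2) with hf
  have hmf : f.Monic := (q_monic k).comp_X_add_C 2
  have hdf : f.natDegree = 2 ^ k := by
    rw [hf, natDegree_comp, natDegree_X_add_C, mul_one, q_natDegree]
  have hmapf : f.map (Int.castRingHom (ZMod 2)) = X ^ (2 ^ k) := by
    rw [hf, Polynomial.map_comp, q_map_zmod]
    have h1 : (X + C 2 : Polynomial ℤ).map (Int.castRingHom (ZMod 2)) = X := by
      simp only [Polynomial.map_add, map_X, map_C]
      rw [show ((Int.castRingHom (ZMod 2)) 2) = 0 from rfl, map_zero, add_zero]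
    rw [h1, comp_X]
  have heis : f.IsEisensteinAt (Ideal.span {(2 : ℤ)}) := by
    constructor
    · rw [hmf.leadingCoeff, Ideal.mem_span_singleton]
      norm_num
    · intro n hn
      rw [hdf] at hn
      rw [Ideal.mem_span_singleton]
      have hz : ((f.coeff n : ZMod 2)) = 0 := by
        have := congrArg (fun p => Polynomial.coeff p n) hmapf
        simp only [Polynomial.coeff_map, Polynomial.coeff_X_pow, Int.coe_castRingHom] at this
        rw [this, if_neg (by omega)]
      have := (ZMod.intCast_zmod_eq_zero_iff_dvd (f.coeff n) 2).1 hz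
      exact_mod_cast this
    · rw [Ideal.span_singleton_pow, Ideal.mem_span_singleton,
        Polynomial.coeff_zero_eq_eval_zero, hf, eval_comp]
      simp only [eval_add, eval_X, eval_C, zero_add, q_eval_two]
      norm_num
  have hprime : (Ideal.span {(2 : ℤ)}).IsPrime :=
    (Ideal.span_singleton_prime (by norm_num)).2 Int.prime_two
  have hirr_f : Irreducible f :=
    heis.irreducible hprime hmf.isPrimitive (by rw [hdf]; positivity)
  have hfe : f = (Polynomial.algEquivAevalXAddC (2 : ℤ)) (q k) := by
    rw [Polynomial.algEquivAevalXAddC_apply, hf, comp_eq_aeval]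
  rw [hfe] at hirr_f
  exact (MulEquiv.irreducible_iff (Polynomial.algEquivAevalXAddC (2 : ℤ))).1 hirr_f

lemma u_irreducible (k : ℕ) : Irreducible (u (2 ^ k)) := by
  rw [← q_map]
  exact ((q_monic k).irreducible_iff_irreducible_map_fraction_map).1 (q_irreducible k)

lemma u_monic (k : ℕ) : (u (2 ^ k)).Monic := by
  rw [← q_map]; exact (q_monic k).map _

theorem minpoly_two_cos_pow_two (r : ℕ) (hr : 2 ≤ r) :
    minpoly ℚ (2 * Real.cos (2 * π / (2 ^ r))) = u (2 ^ (r - 2)) := by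
  obtain ⟨s, rfl⟩ := Nat.exists_eq_add_of_le hr
  have hs : 2 + s - 2 = s := by omega
  rw [hs]
  set θ : ℝ := 2 * π / (2 ^ (2 + s)) with hθ
  have hroot : (Polynomial.aeval (2 * Real.cos θ)) (u (2 ^ s)) = 0 := by
    unfold u
    rw [map_mul, aeval_comp]
    have h1 : (Polynomial.aeval (2 * Real.cos θ)) (C (1/2 : ℚ) * X) = Real.cos θ := by
      simp
    rw [h1, Polynomial.Chebyshev.aeval_T, Polynomial.Chebyshev.T_real_cos]
    have h2 : ((2 ^ s : ℕ) : ℤ) * θ = π / 2 := by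
      push_cast
      rw [hθ]
      have hne : (2 : ℝ) ^ s ≠ 0 := by positivity
      rw [pow_add]
      field_simp
    rw [h2, Real.cos_pi_div_two]
    simp
  exact (minpoly.eq_of_irreducible_of_monic (u_irreducible s) hroot (u_monic s)).symm
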